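/- The symmetric part Σ_n⁺ of the swap algebra (dim V = 2), i.e., the span of the operators g + g⁻¹ for g ∈ S_n, is spanned over ℂ by the operators induced by involutions of S_n. -/

import Mathlib

/-- The operator on `V^⊗n` (here realized as `(Fin n → Fin d) → ℂ`, `dim V = d`)
induced by a permutation `σ ∈ Sₙ` permuting the tensor factors. -/
def permOp (d n : ℕ) (σ : Equiv.Perm (Fin n)) :
    Module.End ℂ ((Fin n → Fin d) → ℂ) where
  toFun f := fun x => f (x ∘ σ)
  map_add' _ _ := rfl
  map_smul' _ _ := rfl

namespace SpanInvol
open Equiv Function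

variable {n : ℕ}

lemma permOp_apply (d : ℕ) (g : Equiv.Perm (Fin n)) (f : (Fin n → Fin d) → ℂ)
    (x : Fin n → Fin d) : permOp d n g f x = f (x ∘ g) := rfl

lemma permOp_mul (d : ℕ) (g h : Equiv.Perm (Fin n)) :
    permOp d n (g * h) = permOp d n g * permOp d n h := rfl

/-- the 3-cycle a → b → c → a -/
def cyc3 (a b c : Fin n) : Equiv.Perm (Fin n) := Equiv.swap a b * Equiv.swap b c

section cyc3
variable {a b c : Fin n}

lemma cyc3_fst (hab : a ≠ b) (hac : a ≠ c) : cyc3 a b c a = b := by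
  simp [cyc3, Equiv.swap_apply_of_ne_of_ne hab hac]

lemma cyc3_snd (hac : a ≠ c) (hbc : b ≠ c) : cyc3 a b c b = c := by
  simp [cyc3, Equiv.swap_apply_of_ne_of_ne (Ne.symm hac) (Ne.symm hbc)]

lemma cyc3_thd : cyc3 a b c c = a := by
  simp [cyc3]

lemma cyc3_other {v : Fin n} (hva : v ≠ a) (hvb : v ≠ b) (hvc : v ≠ c) :
    cyc3 a b c v = v := by
  simp [cyc3, Equiv.swap_apply_of_ne_of_ne hvb hvc,
    Equiv.swap_apply_of_ne_of_ne hva hvb]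

lemma cyc3_inv : (cyc3 a b c)⁻¹ = cyc3 c b a := by
  simp only [cyc3, mul_inv_rev, Equiv.swap_inv]
  rw [Equiv.swap_comm b c, Equiv.swap_comm a b]

end cyc3

/-- The key relation available for `d = 2`. -/
lemma key3 {a b c : Fin n} (hab : a ≠ b) (hac : a ≠ c) (hbc : b ≠ c) :
    permOp 2 n 1 + permOp 2 n (cyc3 a b c) + permOp 2 n (cyc3 a b c)⁻¹ =
      permOp 2 n (Equiv.swap a b) + permOp 2 n (Equiv.swap a c)
        + permOp 2 n (Equiv.swap b c) := by
  apply LinearMap.ext; intro f; funext x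
  simp only [LinearMap.add_apply, Pi.add_apply, permOp_apply]
  rw [cyc3_inv]
  have tri : x a = x b ∨ x a = x c ∨ x b = x c := by
    have h : ∀ u v w : Fin 2, u = v ∨ u = w ∨ v = w := by decide
    exact h _ _ _
  have h1 : x ∘ ⇑(1 : Equiv.Perm (Fin n)) = x := by funext i; simp
  rw [h1]
  rcases tri with h | h | h
  · have e1 : x ∘ ⇑(Equiv.swap a b) = x := by
      funext i
      simp only [comp_apply, Equiv.swap_apply_def]
      split_ifs <;> simp_all
    have e2 : x ∘ ⇑(cyc3 a b c) = x ∘ ⇑(Equiv.swap b c) := by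
      funext i
      simp only [comp_apply, cyc3, Equiv.Perm.mul_apply, Equiv.swap_apply_def]
      split_ifs <;> simp_all
    have e3 : x ∘ ⇑(cyc3 c b a) = x ∘ ⇑(Equiv.swap a c) := by
      funext i
      simp only [comp_apply, cyc3, Equiv.Perm.mul_apply, Equiv.swap_apply_def]
      split_ifs <;> simp_all
    rw [e1, e2, e3]; ring
  · have e1 : x ∘ ⇑(Equiv.swap a c) = x := by
      funext i
      simp only [comp_apply, Equiv.swap_apply_def]
      split_ifs <;> simp_all
    have e2 : x ∘ ⇑(cyc3 a b c) = x ∘ ⇑(Equiv.swap a b) := by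
      funext i
      simp only [comp_apply, cyc3, Equiv.Perm.mul_apply, Equiv.swap_apply_def]
      split_ifs <;> simp_all
    have e3 : x ∘ ⇑(cyc3 c b a) = x ∘ ⇑(Equiv.swap b c) := by
      funext i
      simp only [comp_apply, cyc3, Equiv.Perm.mul_apply, Equiv.swap_apply_def]
      split_ifs <;> simp_all
    rw [e1, e2, e3]; ring
  · have e1 : x ∘ ⇑(Equiv.swap b c) = x := by
      funext i
      simp only [comp_apply, Equiv.swap_apply_def]
      split_ifs <;> simp_all
    have e2 : x ∘ ⇑(cyc3 a b c) = x ∘ ⇑(Equiv.swap a c) := by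
      funext i
      simp only [comp_apply, cyc3, Equiv.Perm.mul_apply, Equiv.swap_apply_def]
      split_ifs <;> simp_all
    have e3 : x ∘ ⇑(cyc3 c b a) = x ∘ ⇑(Equiv.swap a b) := by
      funext i
      simp only [comp_apply, cyc3, Equiv.Perm.mul_apply, Equiv.swap_apply_def]
      split_ifs <;> simp_all
    rw [e1, e2, e3]; ring


/-- symmetrized operator -/
noncomputable def Mop (g : Equiv.Perm (Fin n)) : Module.End ℂ ((Fin n → Fin 2) → ℂ) :=
  permOp 2 n g + permOp 2 n g⁻¹

/-- span of involution operators -/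
noncomputable def KK (n : ℕ) : Submodule ℂ (Module.End ℂ ((Fin n → Fin 2) → ℂ)) :=
  Submodule.span ℂ
    {f : Module.End ℂ ((Fin n → Fin 2) → ℂ) |
      ∃ g : Equiv.Perm (Fin n), g * g = 1 ∧ f = permOp 2 n g}

lemma mop_invol_mem {t : Equiv.Perm (Fin n)} (ht : t * t = 1) : Mop t ∈ KK n := by
  have hinv : t⁻¹ = t := by
    rw [inv_eq_iff_mul_eq_one]; exact ht
  rw [Mop, hinv]
  exact add_mem (Submodule.subset_span ⟨t, ht, rfl⟩) (Submodule.subset_span ⟨t, ht, rfl⟩)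

lemma mop_inv (g : Equiv.Perm (Fin n)) : Mop g⁻¹ = Mop g := by
  rw [Mop, Mop, inv_inv, add_comm]

/-- The symmetrized key relation, multiplied by arbitrary `g`. -/
lemma relM {a b c : Fin n} (hab : a ≠ b) (hac : a ≠ c) (hbc : b ≠ c)
    (g : Equiv.Perm (Fin n)) :
    Mop g + Mop (cyc3 a b c * g) + Mop ((cyc3 a b c)⁻¹ * g) =
      Mop (Equiv.swap a b * g) + Mop (Equiv.swap a c * g)
        + Mop (Equiv.swap b c * g) := by
  have k3 := key3 hab hac hbc
  have e1 : permOp 2 n g + permOp 2 n (cyc3 a b c * g)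
      + permOp 2 n ((cyc3 a b c)⁻¹ * g) =
      permOp 2 n (Equiv.swap a b * g) + permOp 2 n (Equiv.swap a c * g)
        + permOp 2 n (Equiv.swap b c * g) := by
    have := congrArg (fun z => z * permOp 2 n g) k3
    simpa only [add_mul, permOp_mul, (LinearMap.ext fun _ => rfl : permOp 2 n 1 = 1), one_mul] using this
  have e2 : permOp 2 n g⁻¹ + permOp 2 n (cyc3 a b c * g)⁻¹
      + permOp 2 n ((cyc3 a b c)⁻¹ * g)⁻¹ =
      permOp 2 n (Equiv.swap a b * g)⁻¹ + permOp 2 n (Equiv.swap a c * g)⁻¹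
        + permOp 2 n (Equiv.swap b c * g)⁻¹ := by
    have := congrArg (fun z => permOp 2 n g⁻¹ * z) k3
    simp only [mul_add, ← permOp_mul, mul_one] at this
    calc permOp 2 n g⁻¹ + permOp 2 n (cyc3 a b c * g)⁻¹
          + permOp 2 n ((cyc3 a b c)⁻¹ * g)⁻¹
        = permOp 2 n g⁻¹ + permOp 2 n (g⁻¹ * (cyc3 a b c)⁻¹)
          + permOp 2 n (g⁻¹ * cyc3 a b c) := by rw [mul_inv_rev, mul_inv_rev, inv_inv]
      _ = permOp 2 n g⁻¹ + permOp 2 n (g⁻¹ * cyc3 a b c)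
          + permOp 2 n (g⁻¹ * (cyc3 a b c)⁻¹) := by abel
      _ = permOp 2 n (g⁻¹ * Equiv.swap a b) + permOp 2 n (g⁻¹ * Equiv.swap a c)
          + permOp 2 n (g⁻¹ * Equiv.swap b c) := this
      _ = _ := by
          rw [mul_inv_rev, mul_inv_rev, mul_inv_rev, Equiv.swap_inv, Equiv.swap_inv,
            Equiv.swap_inv]
  have := congrArg₂ (· + ·) e1 e2
  simp only [Mop]
  convert this using 1 <;> abel

/-- the measure: number of points lying on cycles of length ≥ 3 -/
noncomputable def Bm (g : Equiv.Perm (Fin n)) : ℕ :=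
  (Finset.univ.filter (fun v => g (g v) ≠ v)).card

lemma Bm_eq_zero_iff (g : Equiv.Perm (Fin n)) : Bm g = 0 ↔ g * g = 1 := by
  constructor
  · intro h
    apply Equiv.ext
    intro v
    have hemp := Finset.card_eq_zero.mp h
    have hv : g (g v) = v := by
      by_contra hv
      have hmem : v ∈ Finset.univ.filter (fun v => g (g v) ≠ v) :=
        Finset.mem_filter.mpr ⟨Finset.mem_univ v, hv⟩
      rw [hemp] at hmem
      exact absurd hmem (Finset.notMem_empty v)
    simpa [Equiv.Perm.mul_apply] using hv
  · intro h
    apply Finset.card_eq_zero.mpr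
    apply Finset.filter_eq_empty_iff.mpr
    intro v _
    simp only [not_not]
    have : (g * g) v = (1 : Equiv.Perm (Fin n)) v := by rw [h]
    simpa using this

lemma Bm_mono {g h : Equiv.Perm (Fin n)} (R : Fin n → Prop)
    (hagree : ∀ v, ¬ R v → h v = g v)
    (hclosed : ∀ v, ¬ R v → ¬ R (g v))
    (hbig : ∀ v, R v → g (g v) ≠ v) : Bm h ≤ Bm g := by
  apply Finset.card_le_card
  intro v hv
  simp only [Finset.mem_filter, Finset.mem_univ, true_and] at hv ⊢
  by_cases hr : R v
  · exact hbig v hr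
  · rw [hagree v hr, hagree (g v) (hclosed v hr)] at hv
    exact hv

lemma Bm_strict {g h : Equiv.Perm (Fin n)} (R : Fin n → Prop)
    (hagree : ∀ v, ¬ R v → h v = g v)
    (hclosed : ∀ v, ¬ R v → ¬ R (g v))
    (hbig : ∀ v, R v → g (g v) ≠ v)
    (w : Fin n) (hw : R w) (hfix : h (h w) = w) : Bm h < Bm g := by
  apply Finset.card_lt_card
  constructor
  · intro v hv
    simp only [Finset.mem_filter, Finset.mem_univ, true_and] at hv ⊢
    by_cases hr : R v
    · exact hbig v hr
    · rw [hagree v hr, hagree (g v) (hclosed v hr)] at hv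
      exact hv
  · intro hsub
    have hwmem : w ∈ Finset.univ.filter (fun v => g (g v) ≠ v) := by
      simp only [Finset.mem_filter, Finset.mem_univ, true_and]
      exact hbig w hw
    have := hsub hwmem
    simp only [Finset.mem_filter, Finset.mem_univ, true_and] at this
    exact this hfix


/-! ### ZMod helpers -/

lemma zmod_natCast_ne_zero {k m : ℕ} (h0 : 0 < m) (hmk : m < k) :
    ((m : ℕ) : ZMod k) ≠ 0 := by
  intro h
  haveI : NeZero k := ⟨by omega⟩
  have hv := ZMod.val_cast_of_lt hmk
  rw [h] at hv
  simp [ZMod.val_zero] at hv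
  omega

section zmodfacts
variable {k : ℕ}

lemma zc1 (hk : 2 ≤ k) : (1 : ZMod k) ≠ 0 := by
  have := zmod_natCast_ne_zero (k := k) (m := 1) (by omega) (by omega)
  simpa using this

lemma zc2 (hk : 3 ≤ k) : (2 : ZMod k) ≠ 0 := by
  have := zmod_natCast_ne_zero (k := k) (m := 2) (by omega) (by omega)
  simpa using this

lemma zc3 (hk : 4 ≤ k) : (3 : ZMod k) ≠ 0 := by
  have := zmod_natCast_ne_zero (k := k) (m := 3) (by omega) (by omega)
  simpa using this

end zmodfacts

/-! ### cycle words -/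

def Word (k : ℕ) (x : ZMod k → Fin n) (g : Equiv.Perm (Fin n)) : Prop :=
  Function.Injective x ∧ ∀ i, g (x i) = x (i + 1)

lemma Word.out_closed {k : ℕ} {x : ZMod k → Fin n} {g : Equiv.Perm (Fin n)}
    (hW : Word k x g) {v : Fin n} (hv : ∀ i, v ≠ x i) : ∀ j, g v ≠ x j := by
  intro j h
  have h2 := hW.2 (j - 1)
  rw [sub_add_cancel] at h2
  exact hv (j - 1) (g.injective (h.trans h2.symm))

lemma Bm_word_mono {k : ℕ} (hk : 3 ≤ k) {x : ZMod k → Fin n}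
    {g h : Equiv.Perm (Fin n)} (hW : Word k x g)
    (hagree : ∀ v, (∀ i, v ≠ x i) → h v = g v) : Bm h ≤ Bm g := by
  apply Bm_mono (R := fun v => ∃ i, v = x i)
  · intro v hv
    exact hagree v (fun i hi => hv ⟨i, hi⟩)
  · intro v hv
    rintro ⟨j, hj⟩
    exact hW.out_closed (fun i hi => hv ⟨i, hi⟩) j hj
  · rintro v ⟨i, rfl⟩
    rw [hW.2, hW.2]
    intro hcon
    have : i + 1 + 1 = i := hW.1 hcon
    have h2 : (2 : ZMod k) = 0 := by linear_combination this
    exact zc2 hk h2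

lemma Bm_word_strict {k : ℕ} (hk : 3 ≤ k) {x : ZMod k → Fin n}
    {g h : Equiv.Perm (Fin n)} (hW : Word k x g)
    (hagree : ∀ v, (∀ i, v ≠ x i) → h v = g v)
    (i0 : ZMod k) (hfix : h (h (x i0)) = x i0) : Bm h < Bm g := by
  apply Bm_strict (R := fun v => ∃ i, v = x i) _ _ _ (x i0) ⟨i0, rfl⟩ hfix
  · intro v hv
    exact hagree v (fun i hi => hv ⟨i, hi⟩)
  · intro v hv
    rintro ⟨j, hj⟩
    exact hW.out_closed (fun i hi => hv ⟨i, hi⟩) j hj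
  · rintro v ⟨i, rfl⟩
    rw [hW.2, hW.2]
    intro hcon
    have : i + 1 + 1 = i := hW.1 hcon
    have h2 : (2 : ZMod k) = 0 := by linear_combination this
    exact zc2 hk h2

/-- two permutations with the same cycle word agreeing off the word coincide -/
lemma word_ext {k : ℕ} {x : ZMod k → Fin n} {g h : Equiv.Perm (Fin n)}
    (hWg : Word k x g) (hWh : Word k x h)
    (hagree : ∀ v, (∀ i, v ≠ x i) → h v = g v) : h = g := by
  apply Equiv.ext
  intro v
  by_cases hv : ∀ i, v ≠ x i
  · exact hagree v hv
  · push_neg at hv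
    obtain ⟨i, rfl⟩ := hv
    rw [hWg.2, hWh.2]

/-! ### the tail rotations -/

def tau {k : ℕ} (i : ZMod k) : ZMod k :=
  if i = 0 then 0 else if i = 1 then -1 else i - 1

def itau {k : ℕ} (j : ZMod k) : ZMod k :=
  if j = 0 then 0 else if j = -1 then 1 else j + 1

def tau' {k : ℕ} (i : ZMod k) : ZMod k :=
  if i = 0 then 0 else if i = -2 then 1 else if i = -1 then 2 else i + 2

def itau' {k : ℕ} (j : ZMod k) : ZMod k :=
  if j = 0 then 0 else if j = 1 then -2 else if j = 2 then -1 else j - 2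

section taufacts
variable {k : ℕ}

lemma tau_small_facts (hk : 3 ≤ k) :
    (1 : ZMod k) ≠ 0 ∧ (2 : ZMod k) ≠ 0 ∧ (-1 : ZMod k) ≠ 0 ∧ (-1 : ZMod k) ≠ 1 ∧
    (2 : ZMod k) ≠ 1 ∧ (-2 : ZMod k) ≠ 0 ∧ (-2 : ZMod k) ≠ -1 := by
  have c1 : (1 : ZMod k) ≠ 0 := zc1 (by omega)
  have c2 : (2 : ZMod k) ≠ 0 := zc2 hk
  refine ⟨c1, c2, ?_, ?_, ?_, ?_, ?_⟩
  · intro h; exact c1 (by linear_combination -h)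
  · intro h; exact c2 (by linear_combination -h)
  · intro h; exact c1 (by linear_combination h)
  · intro h; exact c2 (by linear_combination -h)
  · intro h; exact c1 (by linear_combination -h)

lemma itau_tau (hk : 3 ≤ k) : ∀ i : ZMod k, itau (tau i) = i := by
  obtain ⟨c1, c2, d1, d2, d3, d4, d5⟩ := tau_small_facts hk
  intro i
  by_cases h0 : i = 0
  · subst h0; simp [tau, itau]
  by_cases h1 : i = 1
  · subst h1; simp [tau, itau, c1, d1]
  · have e0 : i - 1 ≠ 0 := fun h => h1 (by linear_combination h)
    have e1 : i - 1 ≠ -1 := fun h => h0 (by linear_combination h)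
    simp [tau, itau, h0, h1, e0, e1]

lemma tau_injective (hk : 3 ≤ k) : Function.Injective (tau (k := k)) :=
  Function.LeftInverse.injective (itau_tau hk)

lemma itau'_tau' (hk : 3 ≤ k) : ∀ i : ZMod k, itau' (tau' i) = i := by
  obtain ⟨c1, c2, d1, d2, d3, d4, d5⟩ := tau_small_facts hk
  intro i
  by_cases h0 : i = 0
  · subst h0; simp [tau', itau']
  by_cases h2 : i = -2
  · subst h2; simp [tau', itau', d4, c1]
  by_cases h1 : i = -1
  · subst h1; simp [tau', itau', d1, d5.symm, c2, d3]
  · have e0 : i + 2 ≠ 0 := fun h => h2 (by linear_combination h)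
    have e1 : i + 2 ≠ 1 := fun h => h1 (by linear_combination h)
    have e2 : i + 2 ≠ 2 := fun h => h0 (by linear_combination h)
    simp [tau', itau', h0, h1, h2, e0, e1, e2]

lemma tau'_injective (hk : 3 ≤ k) : Function.Injective (tau' (k := k)) :=
  Function.LeftInverse.injective (itau'_tau' hk)

/-- the central composite identity -/
lemma tau_tau_tau' (hk : 3 ≤ k) : ∀ i : ZMod k, tau (tau (tau' i)) = i := by
  obtain ⟨c1, c2, d1, d2, d3, d4, d5⟩ := tau_small_facts hk
  intro i
  by_cases h0 : i = 0
  · subst h0; simp [tau', tau]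
  by_cases h2 : i = -2
  · subst h2
    have e1 : tau' (-2 : ZMod k) = 1 := by simp [tau', d4]
    have e2 : tau (1 : ZMod k) = -1 := by simp [tau, c1]
    have e3 : tau (-1 : ZMod k) = -2 := by
      simp only [tau, if_neg d1, if_neg d2]; ring
    rw [e1, e2, e3]
  by_cases h1 : i = -1
  · subst h1
    have e1 : tau' (-1 : ZMod k) = 2 := by
      simp [tau', d1, show (-1 : ZMod k) ≠ -2 from fun h => d5 h.symm]
    have e2 : tau (2 : ZMod k) = 1 := by
      simp only [tau, if_neg c2, if_neg d3]; ring
    have e3 : tau (1 : ZMod k) = -1 := by simp [tau, c1]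
    rw [e1, e2, e3]
  · have e0 : i + 2 ≠ 0 := fun h => h2 (by linear_combination h)
    have e1 : i + 2 ≠ 1 := fun h => h1 (by linear_combination h)
    have f0 : i + 1 ≠ 0 := fun h => h1 (by linear_combination h)
    have f1 : i + 1 ≠ 1 := fun h => h0 (by linear_combination h)
    simp only [tau', tau, if_neg h0, if_neg h2, if_neg h1, if_neg e0, if_neg e1]
    have e : i + 2 - 1 = i + 1 := by ring
    rw [e, if_neg f0, if_neg f1]
    ring

end taufacts


/-! ### the two basic moves -/

/-- Move 1: rotate the tail of the cycle word.  `rot` is the same-level partner,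
all other partners in the relation are strictly smaller. -/
lemma step {k : ℕ} (hk : 3 ≤ k) {x : ZMod k → Fin n} {g : Equiv.Perm (Fin n)}
    (hW : Word k x g)
    (IHB : ∀ h : Equiv.Perm (Fin n), Bm h < Bm g → Mop h ∈ KK n) :
    Word k (x ∘ tau) (cyc3 (x (-1)) (x 0) (x 1) * g) ∧
    (∀ v, (∀ i, v ≠ x i) → (cyc3 (x (-1)) (x 0) (x 1) * g) v = g v) ∧
    Mop g + Mop (cyc3 (x (-1)) (x 0) (x 1) * g) ∈ KK n := by
  obtain ⟨c1, c2, d1, d2, d3, d4, d5⟩ := tau_small_facts hk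
  have hAB : x (-1) ≠ x 0 := fun h => d1 (hW.1 h)
  have hAC : x (-1) ≠ x 1 := fun h => d2 (hW.1 h)
  have hBC : x 0 ≠ x 1 := fun h => c1 (hW.1 h).symm
  -- value lemmas for tau
  have t0 : tau (0 : ZMod k) = 0 := by simp [tau]
  have t1 : tau (1 : ZMod k) = -1 := by simp [tau, c1]
  have tm1 : tau (-1 : ZMod k) = -2 := by
    simp only [tau, if_neg d1, if_neg d2]; ring
  have t2 : tau (2 : ZMod k) = 1 := by
    simp only [tau, if_neg c2, if_neg d3]; ring
  have telse : ∀ i : ZMod k, i ≠ 0 → i ≠ 1 → tau i = i - 1 := by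
    intro i h0 h1; simp [tau, h0, h1]
  have hoff : ∀ v, (∀ i, v ≠ x i) → (cyc3 (x (-1)) (x 0) (x 1) * g) v = g v := by
    intro v hv
    have h' := hW.out_closed hv
    exact cyc3_other (h' (-1)) (h' 0) (h' 1)
  have hword : Word k (x ∘ tau) (cyc3 (x (-1)) (x 0) (x 1) * g) := by
    constructor
    · exact hW.1.comp (tau_injective hk)
    · intro i
      show cyc3 (x (-1)) (x 0) (x 1) (g (x (tau i))) = x (tau (i + 1))
      rw [hW.2]
      by_cases hi0 : i = 0
      · subst hi0
        rw [t0, zero_add, t1]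
        exact cyc3_thd
      by_cases hi1 : i = 1
      · subst hi1
        rw [t1, neg_add_cancel, show (1 : ZMod k) + 1 = 2 by ring, t2]
        exact cyc3_snd hAC hBC
      by_cases him1 : i = -1
      · subst him1
        rw [tm1, show (-2 : ZMod k) + 1 = -1 by ring, neg_add_cancel, t0]
        exact cyc3_fst hAB hAC
      · rw [telse i hi0 hi1, sub_add_cancel,
          telse (i + 1) (fun h => him1 (by linear_combination h))
            (fun h => hi0 (by linear_combination h)),
          add_sub_cancel_right]
        exact cyc3_other (fun h => him1 (hW.1 h)) (fun h => hi0 (hW.1 h))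
          (fun h => hi1 (hW.1 h))
  refine ⟨hword, hoff, ?_⟩
  have E := relM hAB hAC hBC g
  -- partner (cyc3)⁻¹ * g is strictly smaller
  have hqoff : ∀ v, (∀ i, v ≠ x i) → ((cyc3 (x (-1)) (x 0) (x 1))⁻¹ * g) v = g v := by
    intro v hv
    have h' := hW.out_closed hv
    show (cyc3 (x (-1)) (x 0) (x 1))⁻¹ (g v) = g v
    rw [cyc3_inv]
    exact cyc3_other (h' 1) (h' 0) (h' (-1))
  have hqfix : ((cyc3 (x (-1)) (x 0) (x 1))⁻¹ * g) (x 0) = x 0 := by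
    show (cyc3 (x (-1)) (x 0) (x 1))⁻¹ (g (x 0)) = x 0
    rw [hW.2, zero_add, cyc3_inv]
    exact cyc3_fst hBC.symm hAC.symm
  have hq : Mop ((cyc3 (x (-1)) (x 0) (x 1))⁻¹ * g) ∈ KK n :=
    IHB _ (Bm_word_strict hk hW hqoff 0 (by rw [hqfix, hqfix]))
  -- partner swap (x (-1)) (x 0) * g
  have h1off : ∀ v, (∀ i, v ≠ x i) → (Equiv.swap (x (-1)) (x 0) * g) v = g v := by
    intro v hv
    have h' := hW.out_closed hv
    exact Equiv.swap_apply_of_ne_of_ne (h' (-1)) (h' 0)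
  have h1fix : (Equiv.swap (x (-1)) (x 0) * g) (x (-1)) = x (-1) := by
    show Equiv.swap (x (-1)) (x 0) (g (x (-1))) = x (-1)
    rw [hW.2, neg_add_cancel]
    exact Equiv.swap_apply_right _ _
  have hu1 : Mop (Equiv.swap (x (-1)) (x 0) * g) ∈ KK n :=
    IHB _ (Bm_word_strict hk hW h1off (-1) (by rw [h1fix, h1fix]))
  -- partner swap (x (-1)) (x 1) * g
  have h2off : ∀ v, (∀ i, v ≠ x i) → (Equiv.swap (x (-1)) (x 1) * g) v = g v := by
    intro v hv
    have h' := hW.out_closed hv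
    exact Equiv.swap_apply_of_ne_of_ne (h' (-1)) (h' 1)
  have h2a : (Equiv.swap (x (-1)) (x 1) * g) (x 0) = x (-1) := by
    show Equiv.swap (x (-1)) (x 1) (g (x 0)) = x (-1)
    rw [hW.2, zero_add]
    exact Equiv.swap_apply_right _ _
  have h2b : (Equiv.swap (x (-1)) (x 1) * g) (x (-1)) = x 0 := by
    show Equiv.swap (x (-1)) (x 1) (g (x (-1))) = x 0
    rw [hW.2, neg_add_cancel]
    exact Equiv.swap_apply_of_ne_of_ne hAB.symm hBC
  have hu2 : Mop (Equiv.swap (x (-1)) (x 1) * g) ∈ KK n :=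
    IHB _ (Bm_word_strict hk hW h2off 0 (by rw [h2a, h2b]))
  -- partner swap (x 0) (x 1) * g
  have h3off : ∀ v, (∀ i, v ≠ x i) → (Equiv.swap (x 0) (x 1) * g) v = g v := by
    intro v hv
    have h' := hW.out_closed hv
    exact Equiv.swap_apply_of_ne_of_ne (h' 0) (h' 1)
  have h3fix : (Equiv.swap (x 0) (x 1) * g) (x 0) = x 0 := by
    show Equiv.swap (x 0) (x 1) (g (x 0)) = x 0
    rw [hW.2, zero_add]
    exact Equiv.swap_apply_right _ _
  have hu3 : Mop (Equiv.swap (x 0) (x 1) * g) ∈ KK n :=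
    IHB _ (Bm_word_strict hk hW h3off 0 (by rw [h3fix, h3fix]))
  rw [eq_sub_of_add_eq E]
  exact sub_mem (add_mem (add_mem hu1 hu2) hu3) hq

/-- Move 2: the relation with the triple `(x 0, x 1, x 3)`.  The same-level
partner has word `x ∘ tau'`; the swap partner `swap (x 0) (x 3) * g` must be
handled by the caller. -/
lemma step2 {k : ℕ} (hk : 4 ≤ k) {x : ZMod k → Fin n} {g : Equiv.Perm (Fin n)}
    (hW : Word k x g)
    (IHB : ∀ h : Equiv.Perm (Fin n), Bm h < Bm g → Mop h ∈ KK n)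
    (hp3 : Mop (Equiv.swap (x 0) (x 3) * g) ∈ KK n) :
    Word k (x ∘ tau') (cyc3 (x 0) (x 1) (x 3) * g) ∧
    (∀ v, (∀ i, v ≠ x i) → (cyc3 (x 0) (x 1) (x 3) * g) v = g v) ∧
    Mop g + Mop (cyc3 (x 0) (x 1) (x 3) * g) ∈ KK n := by
  have hk3 : 3 ≤ k := by omega
  obtain ⟨c1, c2, d1, d2, d3, d4, d5⟩ := tau_small_facts hk3
  have c3 : (3 : ZMod k) ≠ 0 := zc3 hk
  have z01 : (0 : ZMod k) ≠ 1 := fun h => c1 h.symm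
  have z03 : (0 : ZMod k) ≠ 3 := fun h => c3 h.symm
  have z13 : (1 : ZMod k) ≠ 3 := fun h => c2 (by linear_combination -h)
  have z21 : (2 : ZMod k) ≠ 1 := d3
  have z23 : (2 : ZMod k) ≠ 3 := fun h => c1 (by linear_combination -h)
  have h01 : x 0 ≠ x 1 := fun h => z01 (hW.1 h)
  have h03 : x 0 ≠ x 3 := fun h => z03 (hW.1 h)
  have h13 : x 1 ≠ x 3 := fun h => z13 (hW.1 h)
  -- tau' value lemmas
  have t'0 : tau' (0 : ZMod k) = 0 := by simp [tau']
  have t'1 : tau' (1 : ZMod k) = 3 := by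
    rw [tau', if_neg c1, if_neg (show (1 : ZMod k) ≠ -2 from fun h => c3 (by linear_combination h)),
      if_neg (show (1 : ZMod k) ≠ -1 from fun h => c2 (by linear_combination h))]
    ring
  have t'm2 : tau' (-2 : ZMod k) = 1 := by
    simp [tau', d4]
  have t'm1 : tau' (-1 : ZMod k) = 2 := by
    simp [tau', d1, show (-1 : ZMod k) ≠ -2 from fun h => d5 h.symm]
  have t'm3 : tau' (-3 : ZMod k) = -1 := by
    rw [tau', if_neg (show (-3 : ZMod k) ≠ 0 from fun h => c3 (by linear_combination -h)),
      if_neg (show (-3 : ZMod k) ≠ -2 from fun h => c1 (by linear_combination -h)),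
      if_neg (show (-3 : ZMod k) ≠ -1 from fun h => c2 (by linear_combination -h))]
    ring
  have t'else : ∀ i : ZMod k, i ≠ 0 → i ≠ -2 → i ≠ -1 → tau' i = i + 2 := by
    intro i h0 h2 h1; simp [tau', h0, h1, h2]
  have hoff : ∀ v, (∀ i, v ≠ x i) → (cyc3 (x 0) (x 1) (x 3) * g) v = g v := by
    intro v hv
    have h' := hW.out_closed hv
    exact cyc3_other (h' 0) (h' 1) (h' 3)
  have hword : Word k (x ∘ tau') (cyc3 (x 0) (x 1) (x 3) * g) := by
    constructor
    · exact hW.1.comp (tau'_injective hk3)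
    · intro i
      show cyc3 (x 0) (x 1) (x 3) (g (x (tau' i))) = x (tau' (i + 1))
      rw [hW.2]
      by_cases hi0 : i = 0
      · subst hi0
        rw [t'0, zero_add, t'1]
        exact cyc3_snd h03 h13
      by_cases him2 : i = -2
      · subst him2
        rw [t'm2, show (1 : ZMod k) + 1 = 2 by ring,
          show (-2 : ZMod k) + 1 = -1 by ring, t'm1]
        exact cyc3_other (fun h => c2 (hW.1 h)) (fun h => z21 (hW.1 h))
          (fun h => z23 (hW.1 h))
      by_cases him1 : i = -1
      · subst him1
        rw [t'm1, show (2 : ZMod k) + 1 = 3 by ring, neg_add_cancel, t'0]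
        exact cyc3_thd
      by_cases him3 : i = -3
      · subst him3
        rw [t'm3, neg_add_cancel, show (-3 : ZMod k) + 1 = -2 by ring, t'm2]
        exact cyc3_fst h01 h03
      · rw [t'else i hi0 him2 him1,
          t'else (i + 1) (fun h => him1 (by linear_combination h))
            (fun h => him3 (by linear_combination h))
            (fun h => him2 (by linear_combination h))]
        have e : i + 2 + 1 = i + 3 := by ring
        have e2 : i + 1 + 2 = i + 3 := by ring
        rw [e, e2]
        exact cyc3_other (fun h => him3 (by linear_combination hW.1 h))
          (fun h => him2 (by linear_combination hW.1 h))
          (fun h => hi0 (by linear_combination hW.1 h))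
  refine ⟨hword, hoff, ?_⟩
  have E := relM h01 h03 h13 g
  -- partner (cyc3)⁻¹ * g
  have hqoff : ∀ v, (∀ i, v ≠ x i) → ((cyc3 (x 0) (x 1) (x 3))⁻¹ * g) v = g v := by
    intro v hv
    have h' := hW.out_closed hv
    show (cyc3 (x 0) (x 1) (x 3))⁻¹ (g v) = g v
    rw [cyc3_inv]
    exact cyc3_other (h' 3) (h' 1) (h' 0)
  have hqfix : ((cyc3 (x 0) (x 1) (x 3))⁻¹ * g) (x 0) = x 0 := by
    show (cyc3 (x 0) (x 1) (x 3))⁻¹ (g (x 0)) = x 0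
    rw [hW.2, zero_add, cyc3_inv]
    exact cyc3_snd h03.symm h01.symm
  have hq : Mop ((cyc3 (x 0) (x 1) (x 3))⁻¹ * g) ∈ KK n :=
    IHB _ (Bm_word_strict hk3 hW hqoff 0 (by rw [hqfix, hqfix]))
  -- partner swap (x 0) (x 1) * g
  have h1off : ∀ v, (∀ i, v ≠ x i) → (Equiv.swap (x 0) (x 1) * g) v = g v := by
    intro v hv
    have h' := hW.out_closed hv
    exact Equiv.swap_apply_of_ne_of_ne (h' 0) (h' 1)
  have h1fix : (Equiv.swap (x 0) (x 1) * g) (x 0) = x 0 := by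
    show Equiv.swap (x 0) (x 1) (g (x 0)) = x 0
    rw [hW.2, zero_add]
    exact Equiv.swap_apply_right _ _
  have hu1 : Mop (Equiv.swap (x 0) (x 1) * g) ∈ KK n :=
    IHB _ (Bm_word_strict hk3 hW h1off 0 (by rw [h1fix, h1fix]))
  -- partner swap (x 1) (x 3) * g
  have h3off : ∀ v, (∀ i, v ≠ x i) → (Equiv.swap (x 1) (x 3) * g) v = g v := by
    intro v hv
    have h' := hW.out_closed hv
    exact Equiv.swap_apply_of_ne_of_ne (h' 1) (h' 3)
  have h3a : (Equiv.swap (x 1) (x 3) * g) (x 1) = x 2 := by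
    show Equiv.swap (x 1) (x 3) (g (x 1)) = x 2
    rw [hW.2, show (1 : ZMod k) + 1 = 2 by ring]
    exact Equiv.swap_apply_of_ne_of_ne (fun h => z21 (hW.1 h)) (fun h => z23 (hW.1 h))
  have h3b : (Equiv.swap (x 1) (x 3) * g) (x 2) = x 1 := by
    show Equiv.swap (x 1) (x 3) (g (x 2)) = x 1
    rw [hW.2, show (2 : ZMod k) + 1 = 3 by ring]
    exact Equiv.swap_apply_right _ _
  have hu3 : Mop (Equiv.swap (x 1) (x 3) * g) ∈ KK n :=
    IHB _ (Bm_word_strict hk3 hW h3off 1 (by rw [h3a, h3b]))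
  rw [eq_sub_of_add_eq E]
  exact sub_mem (add_mem (add_mem hu1 hp3) hu3) hq


set_option maxHeartbeats 1000000 in
lemma tau5_id : ∀ i : ZMod 6, tau (tau (tau (tau (tau i)))) = i := by decide

lemma two_smul_mem {M : Module.End ℂ ((Fin n → Fin 2) → ℂ)}
    (h : M + M ∈ KK n) : M ∈ KK n := by
  have : M = (2⁻¹ : ℂ) • (M + M) := by
    rw [← two_smul ℂ M, smul_smul]
    norm_num
  rw [this]
  exact Submodule.smul_mem _ _ h

/-- Any permutation with a cycle of length `k ≥ 4` is handled, by strong induction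
on `k`, given the inductive hypothesis on the measure `Bm`. -/
lemma good : ∀ k : ℕ, 4 ≤ k → ∀ g : Equiv.Perm (Fin n), ∀ x : ZMod k → Fin n,
    Word k x g → (∀ h, Bm h < Bm g → Mop h ∈ KK n) → Mop g ∈ KK n := by
  intro k
  induction k using Nat.strong_induction_on with
  | _ k IH =>
  intro hk g x hW IHB
  have hk3 : 3 ≤ k := by omega
  obtain ⟨W1, off1, e0⟩ := step hk3 hW IHB
  have hB1 : Bm (cyc3 (x (-1)) (x 0) (x 1) * g) ≤ Bm g := Bm_word_mono hk3 hW off1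
  set g1 := cyc3 (x (-1)) (x 0) (x 1) * g with hg1
  have IHB1 : ∀ h, Bm h < Bm g1 → Mop h ∈ KK n :=
    fun h hh => IHB h (lt_of_lt_of_le hh hB1)
  obtain ⟨W2, off2, e1⟩ := step hk3 W1 IHB1
  have hB2 : Bm (cyc3 ((x ∘ tau) (-1)) ((x ∘ tau) 0) ((x ∘ tau) 1) * g1) ≤ Bm g1 :=
    Bm_word_mono hk3 W1 off2
  set g2 := cyc3 ((x ∘ tau) (-1)) ((x ∘ tau) 0) ((x ∘ tau) 1) * g1 with hg2
  have IHB2 : ∀ h, Bm h < Bm g2 → Mop h ∈ KK n :=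
    fun h hh => IHB1 h (lt_of_lt_of_le hh hB2)
  -- `W2 : Word k ((x ∘ tau) ∘ tau) g2`
  by_cases hk6 : k = 6
  · -- chain of five rotations
    subst hk6
    obtain ⟨W3, off3, e2⟩ := step hk3 W2 IHB2
    have hB3 : Bm _ ≤ Bm g2 := Bm_word_mono hk3 W2 off3
    set g3 := cyc3 (((x ∘ tau) ∘ tau) (-1)) (((x ∘ tau) ∘ tau) 0)
      (((x ∘ tau) ∘ tau) 1) * g2 with hg3
    have IHB3 : ∀ h, Bm h < Bm g3 → Mop h ∈ KK n :=
      fun h hh => IHB2 h (lt_of_lt_of_le hh hB3)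
    obtain ⟨W4, off4, e3⟩ := step hk3 W3 IHB3
    have hB4 : Bm _ ≤ Bm g3 := Bm_word_mono hk3 W3 off4
    set g4 := cyc3 ((((x ∘ tau) ∘ tau) ∘ tau) (-1)) ((((x ∘ tau) ∘ tau) ∘ tau) 0)
      ((((x ∘ tau) ∘ tau) ∘ tau) 1) * g3 with hg4
    have IHB4 : ∀ h, Bm h < Bm g4 → Mop h ∈ KK n :=
      fun h hh => IHB3 h (lt_of_lt_of_le hh hB4)
    obtain ⟨W5, off5, e4⟩ := step hk3 W4 IHB4
    set g5 := cyc3 (((((x ∘ tau) ∘ tau) ∘ tau) ∘ tau) (-1))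
      (((((x ∘ tau) ∘ tau) ∘ tau) ∘ tau) 0)
      (((((x ∘ tau) ∘ tau) ∘ tau) ∘ tau) 1) * g4 with hg5
    -- identify g5 with g
    have hxx : (((((x ∘ tau) ∘ tau) ∘ tau) ∘ tau) ∘ tau) = x := by
      funext i
      exact congrArg x (tau5_id i)
    rw [hxx] at W5
    have offall : ∀ v, (∀ i, v ≠ x i) → g5 v = g v := by
      intro v hv
      have hv1 : ∀ i, v ≠ (x ∘ tau) i := fun i => hv _
      have hv2 : ∀ i, v ≠ ((x ∘ tau) ∘ tau) i := fun i => hv _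
      have hv3 : ∀ i, v ≠ (((x ∘ tau) ∘ tau) ∘ tau) i := fun i => hv _
      have hv4 : ∀ i, v ≠ ((((x ∘ tau) ∘ tau) ∘ tau) ∘ tau) i := fun i => hv _
      rw [off5 v hv4, off4 v hv3, off3 v hv2, off2 v hv1, off1 v hv]
    have hg5g : g5 = g := word_ext hW W5 offall
    rw [hg5g] at e4
    apply two_smul_mem
    have hsum : Mop g + Mop g =
        (Mop g + Mop g1) - (Mop g1 + Mop g2) + (Mop g2 + Mop g3)
          - (Mop g3 + Mop g4) + (Mop g4 + Mop g) := by abel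
    rw [hsum]
    exact add_mem (sub_mem (add_mem (sub_mem e0 e1) e2) e3) e4
  · -- combo: two rotations and one `tau'` move
    -- first deal with the extra partner `swap (w2 0) (w2 3) * g2`
    have hp3off : ∀ v, (∀ i, v ≠ ((x ∘ tau) ∘ tau) i) →
        (Equiv.swap (((x ∘ tau) ∘ tau) 0) (((x ∘ tau) ∘ tau) 3) * g2) v = g2 v := by
      intro v hv
      have h' := W2.out_closed hv
      exact Equiv.swap_apply_of_ne_of_ne (h' 0) (h' 3)
    have hp3 : Mop (Equiv.swap (((x ∘ tau) ∘ tau) 0) (((x ∘ tau) ∘ tau) 3) * g2)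
        ∈ KK n := by
      have hcase : k = 4 ∨ k = 5 ∨ 7 ≤ k := by omega
      rcases hcase with h4 | h5 | h7
      · -- k = 4 : the partner fixes w2 3
        subst h4
        apply IHB2
        apply Bm_word_strict hk3 W2 hp3off 3
        have hfix : (Equiv.swap (((x ∘ tau) ∘ tau) 0) (((x ∘ tau) ∘ tau) 3) * g2)
            (((x ∘ tau) ∘ tau) 3) = ((x ∘ tau) ∘ tau) 3 := by
          rw [Equiv.Perm.mul_apply, W2.2, show (3 : ZMod 4) + 1 = 0 by decide]
          exact Equiv.swap_apply_left _ _
        rw [hfix, hfix]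
      · -- k = 5 : the partner exchanges w2 3 and w2 4
        subst h5
        apply IHB2
        apply Bm_word_strict hk3 W2 hp3off 3
        have hne40 : ((x ∘ tau) ∘ tau) 4 ≠ ((x ∘ tau) ∘ tau) 0 :=
          fun h => (by decide : (4 : ZMod 5) ≠ 0) (W2.1 h)
        have hne43 : ((x ∘ tau) ∘ tau) 4 ≠ ((x ∘ tau) ∘ tau) 3 :=
          fun h => (by decide : (4 : ZMod 5) ≠ 3) (W2.1 h)
        have ha : (Equiv.swap (((x ∘ tau) ∘ tau) 0) (((x ∘ tau) ∘ tau) 3) * g2)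
            (((x ∘ tau) ∘ tau) 3) = ((x ∘ tau) ∘ tau) 4 := by
          rw [Equiv.Perm.mul_apply, W2.2, show (3 : ZMod 5) + 1 = 4 by decide]
          exact Equiv.swap_apply_of_ne_of_ne hne40 hne43
        have hb : (Equiv.swap (((x ∘ tau) ∘ tau) 0) (((x ∘ tau) ∘ tau) 3) * g2)
            (((x ∘ tau) ∘ tau) 4) = ((x ∘ tau) ∘ tau) 3 := by
          rw [Equiv.Perm.mul_apply, W2.2, show (4 : ZMod 5) + 1 = 0 by decide]
          exact Equiv.swap_apply_left _ _
        rw [ha, hb]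
      · -- k ≥ 7 : the partner carries a cycle word of length k - 3
        haveI : NeZero (k - 3) := ⟨by omega⟩
        haveI : Fact (1 < k - 3) := ⟨by omega⟩
        set p3 := Equiv.swap (((x ∘ tau) ∘ tau) 0) (((x ∘ tau) ∘ tau) 3) * g2 with hp3def
        set y : ZMod (k - 3) → Fin n :=
          fun i => ((x ∘ tau) ∘ tau) ((3 : ZMod k) + (i.val : ZMod k)) with hy
        have castinj : ∀ a b : ℕ, a < k → b < k →
            ((a : ZMod k) = (b : ZMod k)) → a = b := by
          intro a b ha hb h
          have := ZMod.val_cast_of_lt ha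
          have h2 := ZMod.val_cast_of_lt hb
          rw [← this, ← h2, h]
        have hyinj : Function.Injective y := by
          intro i j hij
          have h1 : (3 : ZMod k) + (i.val : ZMod k) = 3 + (j.val : ZMod k) := W2.1 hij
          have h2 : (i.val : ZMod k) = (j.val : ZMod k) := by
            have := add_left_cancel h1
            exact this
          have hv : i.val = j.val :=
            castinj _ _ (by have := ZMod.val_lt i; omega) (by have := ZMod.val_lt j; omega) h2
          exact ZMod.val_injective _ hv
        have hyword : ∀ i : ZMod (k - 3), p3 (y i) = y (i + 1) := by
          intro i
          have hvlt : i.val < k - 3 := ZMod.val_lt i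
          have hvadd : (i + 1).val = (i.val + 1) % (k - 3) := by
            rw [ZMod.val_add, ZMod.val_one]
          show p3 (((x ∘ tau) ∘ tau) ((3 : ZMod k) + (i.val : ZMod k)))
            = ((x ∘ tau) ∘ tau) ((3 : ZMod k) + ((i + 1).val : ZMod k))
          rw [hp3def, Equiv.Perm.mul_apply, W2.2]
          by_cases hwrap : i.val + 1 = k - 3
          · have hz : (3 : ZMod k) + (i.val : ZMod k) + 1 = 0 := by
              have : ((3 + i.val + 1 : ℕ) : ZMod k) = ((k : ℕ) : ZMod k) := by
                rw [show 3 + i.val + 1 = k by omega]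
              push_cast at this
              rw [show ((3:ZMod k) + (i.val : ZMod k) + 1) = 3 + i.val + 1 by push_cast; ring]
              rw [this, ZMod.natCast_self]
            have hz2 : ((i + 1).val : ZMod k) = 0 := by
              rw [hvadd, hwrap, Nat.mod_self]
              simp
            rw [hz, hz2, add_zero]
            exact Equiv.swap_apply_left _ _
          · have hlt : i.val + 1 < k - 3 := by omega
            have hz2 : (i + 1).val = i.val + 1 := by
              rw [hvadd, Nat.mod_eq_of_lt hlt]
            have hidx : (3 : ZMod k) + (i.val : ZMod k) + 1
                = ((4 + i.val : ℕ) : ZMod k) := by push_cast; ring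
            have hne0 : ((4 + i.val : ℕ) : ZMod k) ≠ 0 :=
              zmod_natCast_ne_zero (by omega) (by omega)
            have hne3 : ((4 + i.val : ℕ) : ZMod k) ≠ 3 := by
              intro h
              have h3 : ((4 + i.val : ℕ) : ZMod k) = ((3 : ℕ) : ZMod k) := by
                rw [h]; norm_cast
              have := castinj _ _ (by omega) (by omega) h3
              omega
            rw [hidx]
            have hfix : Equiv.swap (((x ∘ tau) ∘ tau) 0) (((x ∘ tau) ∘ tau) 3)
                (((x ∘ tau) ∘ tau) ((4 + i.val : ℕ) : ZMod k))
                = ((x ∘ tau) ∘ tau) ((4 + i.val : ℕ) : ZMod k) := by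
              apply Equiv.swap_apply_of_ne_of_ne
              · intro h
                exact hne0 (W2.1 h)
              · intro h
                have := W2.1 h
                exact hne3 this
            rw [hfix, hz2]
            congr 1
            push_cast
            ring
        have hBp3 : Bm p3 ≤ Bm g2 := Bm_word_mono hk3 W2 hp3off
        have IHBp3 : ∀ h, Bm h < Bm p3 → Mop h ∈ KK n :=
          fun h hh => IHB2 h (lt_of_lt_of_le hh hBp3)
        exact IH (k - 3) (by omega) (by omega) p3 y ⟨hyinj, hyword⟩ IHBp3
    obtain ⟨W3, off3, e2⟩ := step2 hk W2 IHB2 hp3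
    set p := cyc3 (((x ∘ tau) ∘ tau) 0) (((x ∘ tau) ∘ tau) 1)
      (((x ∘ tau) ∘ tau) 3) * g2 with hpdef
    -- identify p with g
    have hxx : (((x ∘ tau) ∘ tau) ∘ tau') = x := by
      funext i
      exact congrArg x (tau_tau_tau' hk3 i)
    rw [hxx] at W3
    have offall : ∀ v, (∀ i, v ≠ x i) → p v = g v := by
      intro v hv
      have hv1 : ∀ i, v ≠ (x ∘ tau) i := fun i => hv _
      have hv2 : ∀ i, v ≠ ((x ∘ tau) ∘ tau) i := fun i => hv _
      rw [off3 v hv2, off2 v hv1, off1 v hv]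
    have hpg : p = g := word_ext hW W3 offall
    rw [hpg] at e2
    apply two_smul_mem
    have hsum : Mop g + Mop g =
        (Mop g + Mop g1) - (Mop g1 + Mop g2) + (Mop g2 + Mop g) := by abel
    rw [hsum]
    exact add_mem (sub_mem e0 e1) e2


/-! ### building cycle words from non-involutive points -/

lemma mk_word {g : Equiv.Perm (Fin n)} {a : Fin n} (ha : g (g a) ≠ a) :
    ∃ k, 3 ≤ k ∧ ∃ x : ZMod k → Fin n, Word k x g ∧ x 0 = a := by
  have hmem : a ∈ Function.periodicPts ⇑g := by
    refine ⟨orderOf g, orderOf_pos g, ?_⟩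
    show (⇑g)^[orderOf g] a = a
    rw [← Equiv.Perm.coe_pow, pow_orderOf_eq_one]
    rfl
  set k := Function.minimalPeriod ⇑g a with hkdef
  have hk0 : 0 < k := Function.minimalPeriod_pos_of_mem_periodicPts hmem
  have hiter : (⇑g)^[k] a = a := Function.iterate_minimalPeriod
  have hk1 : k ≠ 1 := by
    intro h
    rw [h] at hiter
    simp only [Function.iterate_one] at hiter
    exact ha (by rw [hiter, hiter])
  have hk2 : k ≠ 2 := by
    intro h
    rw [h] at hiter
    have : g (g a) = a := by
      have := hiter
      rwa [show (2 : ℕ) = 1 + 1 from rfl, Function.iterate_add_apply,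
        Function.iterate_one] at this
    exact ha this
  have hk3 : 3 ≤ k := by omega
  haveI : NeZero k := ⟨by omega⟩
  haveI : Fact (1 < k) := ⟨by omega⟩
  refine ⟨k, hk3, fun i => (⇑g)^[i.val] a, ⟨?_, ?_⟩, by
    show (⇑g)^[(0 : ZMod k).val] a = a
    rw [ZMod.val_zero]
    rfl⟩
  · intro i j hij
    have hi := ZMod.val_lt i
    have hj := ZMod.val_lt j
    have := Function.iterate_injOn_Iio_minimalPeriod (f := ⇑g) (x := a)
      (Set.mem_Iio.mpr hi) (Set.mem_Iio.mpr hj) hij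
    exact ZMod.val_injective _ this
  · intro i
    show g ((⇑g)^[i.val] a) = (⇑g)^[(i + 1).val] a
    have h1 : g ((⇑g)^[i.val] a) = (⇑g)^[i.val + 1] a :=
      (Function.iterate_succ_apply' ⇑g i.val a).symm
    rw [h1]
    have hval : (i + 1).val = (i.val + 1) % k := by
      rw [ZMod.val_add, ZMod.val_one]
    by_cases hw : i.val + 1 = k
    · rw [hval, hw, Nat.mod_self, hiter]
      rfl
    · rw [hval, Nat.mod_eq_of_lt (by have := ZMod.val_lt i; omega)]

lemma word_iter {k : ℕ} {x : ZMod k → Fin n} {g : Equiv.Perm (Fin n)}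
    (hW : Word k x g) : ∀ (m : ℕ) (j : ZMod k), (⇑g)^[m] (x j) = x (j + (m : ℕ)) := by
  intro m
  induction m with
  | zero => intro j; simp
  | succ m ih =>
    intro j
    rw [Function.iterate_succ_apply', ih, hW.2]
    congr 1
    push_cast
    ring

/-! ### the case of a 3-cycle whose complement is an involution -/

lemma case3_invol {x : ZMod 3 → Fin n} {g : Equiv.Perm (Fin n)} (hW : Word 3 x g)
    (hrest : ∀ b, (∀ i, b ≠ x i) → g (g b) = b) : Mop g ∈ KK n := by
  have h01 : x 0 ≠ x 1 := fun h => (by decide : (0 : ZMod 3) ≠ 1) (hW.1 h)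
  have h02 : x 0 ≠ x 2 := fun h => (by decide : (0 : ZMod 3) ≠ 2) (hW.1 h)
  have h12 : x 1 ≠ x 2 := fun h => (by decide : (1 : ZMod 3) ≠ 2) (hW.1 h)
  have hg0 : g (x 0) = x 1 := by rw [hW.2, zero_add]
  have hg1 : g (x 1) = x 2 := by rw [hW.2, show (1 : ZMod 3) + 1 = 2 by decide]
  have hg2 : g (x 2) = x 0 := by rw [hW.2, show (2 : ZMod 3) + 1 = 0 by decide]
  have hcases : ∀ i : ZMod 3, i = 0 ∨ i = 1 ∨ i = 2 := by decide
  have E := relM h01 h02 h12 g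
  -- p4 = g⁻¹
  have hp4 : cyc3 (x 0) (x 1) (x 2) * g = g⁻¹ := by
    apply Equiv.ext
    intro v
    rw [Equiv.Perm.mul_apply]
    by_cases hv : ∀ i, v ≠ x i
    · have h' := hW.out_closed hv
      rw [cyc3_other (h' 0) (h' 1) (h' 2)]
      symm
      rw [Equiv.Perm.inv_eq_iff_eq]
      exact (hrest v hv).symm
    · push_neg at hv
      obtain ⟨i, rfl⟩ := hv
      rcases hcases i with rfl | rfl | rfl
      · rw [hg0, cyc3_snd h02 h12, show x 2 = g⁻¹ (x 0) by
          rw [Equiv.Perm.eq_inv_iff_eq]; exact hg2]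
      · rw [hg1, cyc3_thd, show x 0 = g⁻¹ (x 1) by
          rw [Equiv.Perm.eq_inv_iff_eq]; exact hg0]
      · rw [hg2, cyc3_fst h01 h02, show x 1 = g⁻¹ (x 2) by
          rw [Equiv.Perm.eq_inv_iff_eq]; exact hg1]
  -- helper for involutions
  have mkinv : ∀ p : Equiv.Perm (Fin n),
      (∀ v, (∀ i, v ≠ x i) → p v = g v) →
      (p (x 0) = x 0 ∧ p (x 1) = x 2 ∧ p (x 2) = x 1 ∨
       p (x 0) = x 1 ∧ p (x 1) = x 0 ∧ p (x 2) = x 2 ∨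
       p (x 0) = x 2 ∧ p (x 1) = x 1 ∧ p (x 2) = x 0 ∨
       p (x 0) = x 0 ∧ p (x 1) = x 1 ∧ p (x 2) = x 2) → p * p = 1 := by
    intro p hoff hvals
    apply Equiv.ext
    intro v
    rw [Equiv.Perm.mul_apply, Equiv.Perm.one_apply]
    by_cases hv : ∀ i, v ≠ x i
    · rw [hoff v hv, hoff (g v) (fun j => hW.out_closed hv j)]
      exact hrest v hv
    · push_neg at hv
      obtain ⟨i, rfl⟩ := hv
      rcases hvals with ⟨u0, u1, u2⟩ | ⟨u0, u1, u2⟩ | ⟨u0, u1, u2⟩ | ⟨u0, u1, u2⟩ <;>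
        rcases hcases i with rfl | rfl | rfl <;> simp [u0, u1, u2]
  -- the four involutive partners
  have hp5 : ((cyc3 (x 0) (x 1) (x 2))⁻¹ * g) * ((cyc3 (x 0) (x 1) (x 2))⁻¹ * g) = 1 := by
    apply mkinv
    · intro v hv
      have h' := hW.out_closed hv
      rw [Equiv.Perm.mul_apply, cyc3_inv]
      exact cyc3_other (h' 2) (h' 1) (h' 0)
    · refine Or.inr (Or.inr (Or.inr ⟨?_, ?_, ?_⟩)) <;>
        rw [Equiv.Perm.mul_apply, cyc3_inv]
      · rw [hg0]; exact cyc3_snd h02.symm h01.symm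
      · rw [hg1]; exact cyc3_fst h12.symm h02.symm
      · rw [hg2]; exact cyc3_thd
  have hq1 : (Equiv.swap (x 0) (x 1) * g) * (Equiv.swap (x 0) (x 1) * g) = 1 := by
    apply mkinv
    · intro v hv
      have h' := hW.out_closed hv
      rw [Equiv.Perm.mul_apply]
      exact Equiv.swap_apply_of_ne_of_ne (h' 0) (h' 1)
    · refine Or.inl ⟨?_, ?_, ?_⟩ <;> rw [Equiv.Perm.mul_apply]
      · rw [hg0]; exact Equiv.swap_apply_right _ _
      · rw [hg1]; exact Equiv.swap_apply_of_ne_of_ne h02.symm h12.symm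
      · rw [hg2]; exact Equiv.swap_apply_left _ _
  have hq2 : (Equiv.swap (x 0) (x 2) * g) * (Equiv.swap (x 0) (x 2) * g) = 1 := by
    apply mkinv
    · intro v hv
      have h' := hW.out_closed hv
      rw [Equiv.Perm.mul_apply]
      exact Equiv.swap_apply_of_ne_of_ne (h' 0) (h' 2)
    · refine Or.inr (Or.inl ⟨?_, ?_, ?_⟩) <;> rw [Equiv.Perm.mul_apply]
      · rw [hg0]; exact Equiv.swap_apply_of_ne_of_ne h01.symm h12
      · rw [hg1]; exact Equiv.swap_apply_right _ _
      · rw [hg2]; exact Equiv.swap_apply_left _ _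
  have hq3 : (Equiv.swap (x 1) (x 2) * g) * (Equiv.swap (x 1) (x 2) * g) = 1 := by
    apply mkinv
    · intro v hv
      have h' := hW.out_closed hv
      rw [Equiv.Perm.mul_apply]
      exact Equiv.swap_apply_of_ne_of_ne (h' 1) (h' 2)
    · refine Or.inr (Or.inr (Or.inl ⟨?_, ?_, ?_⟩)) <;> rw [Equiv.Perm.mul_apply]
      · rw [hg0]; exact Equiv.swap_apply_left _ _
      · rw [hg1]; exact Equiv.swap_apply_right _ _
      · rw [hg2]; exact Equiv.swap_apply_of_ne_of_ne h01 h02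
  rw [hp4, mop_inv] at E
  apply two_smul_mem
  rw [eq_sub_of_add_eq E]
  exact sub_mem (add_mem (add_mem (mop_invol_mem hq1) (mop_invol_mem hq2))
    (mop_invol_mem hq3)) (mop_invol_mem hp5)


/-- generic construction of a 6-element cycle word -/
lemma word6 {v0 v1 v2 v3 v4 v5 : Fin n} {p : Equiv.Perm (Fin n)}
    (d01 : v0 ≠ v1) (d02 : v0 ≠ v2) (d03 : v0 ≠ v3) (d04 : v0 ≠ v4) (d05 : v0 ≠ v5)
    (d12 : v1 ≠ v2) (d13 : v1 ≠ v3) (d14 : v1 ≠ v4) (d15 : v1 ≠ v5)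
    (d23 : v2 ≠ v3) (d24 : v2 ≠ v4) (d25 : v2 ≠ v5)
    (d34 : v3 ≠ v4) (d35 : v3 ≠ v5) (d45 : v4 ≠ v5)
    (c0 : p v0 = v1) (c1 : p v1 = v2) (c2 : p v2 = v3) (c3 : p v3 = v4)
    (c4 : p v4 = v5) (c5 : p v5 = v0) :
    Word 6 (![v0, v1, v2, v3, v4, v5] : ZMod 6 → Fin n) p := by
  have hc : ∀ m : ZMod 6, m = 0 ∨ m = 1 ∨ m = 2 ∨ m = 3 ∨ m = 4 ∨ m = 5 := by decide
  constructor
  · intro i j hij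
    rcases hc i with rfl | rfl | rfl | rfl | rfl | rfl <;>
      rcases hc j with rfl | rfl | rfl | rfl | rfl | rfl <;>
      first
        | rfl
        | exact absurd hij d01 | exact absurd hij d02 | exact absurd hij d03
        | exact absurd hij d04 | exact absurd hij d05 | exact absurd hij d12
        | exact absurd hij d13 | exact absurd hij d14 | exact absurd hij d15
        | exact absurd hij d23 | exact absurd hij d24 | exact absurd hij d25
        | exact absurd hij d34 | exact absurd hij d35 | exact absurd hij d45
        | exact absurd hij.symm d01 | exact absurd hij.symm d02
        | exact absurd hij.symm d03 | exact absurd hij.symm d04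
        | exact absurd hij.symm d05 | exact absurd hij.symm d12
        | exact absurd hij.symm d13 | exact absurd hij.symm d14
        | exact absurd hij.symm d15 | exact absurd hij.symm d23
        | exact absurd hij.symm d24 | exact absurd hij.symm d25
        | exact absurd hij.symm d34 | exact absurd hij.symm d35
        | exact absurd hij.symm d45
  · intro i
    rcases hc i with rfl | rfl | rfl | rfl | rfl | rfl
    · exact c0
    · exact c1
    · exact c2
    · exact c3
    · exact c4
    · exact c5

/-! ### the case of two disjoint 3-cycles -/

lemma case3_mixed {x y : ZMod 3 → Fin n} {g : Equiv.Perm (Fin n)}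
    (hWx : Word 3 x g) (hWy : Word 3 y g)
    (hdisj : ∀ i j, y i ≠ x j)
    (IHB : ∀ h, Bm h < Bm g → Mop h ∈ KK n) : Mop g ∈ KK n := by
  have hx01 : x 0 ≠ x 1 := fun h => (by decide : (0 : ZMod 3) ≠ 1) (hWx.1 h)
  have hx02 : x 0 ≠ x 2 := fun h => (by decide : (0 : ZMod 3) ≠ 2) (hWx.1 h)
  have hx12 : x 1 ≠ x 2 := fun h => (by decide : (1 : ZMod 3) ≠ 2) (hWx.1 h)
  have hy01 : y 0 ≠ y 1 := fun h => (by decide : (0 : ZMod 3) ≠ 1) (hWy.1 h)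
  have hy02 : y 0 ≠ y 2 := fun h => (by decide : (0 : ZMod 3) ≠ 2) (hWy.1 h)
  have hy12 : y 1 ≠ y 2 := fun h => (by decide : (1 : ZMod 3) ≠ 2) (hWy.1 h)
  have hdisj' : ∀ i j, x i ≠ y j := fun i j h => hdisj j i h.symm
  have hgx0 : g (x 0) = x 1 := by rw [hWx.2, zero_add]
  have hgx1 : g (x 1) = x 2 := by rw [hWx.2, show (1 : ZMod 3) + 1 = 2 by decide]
  have hgx2 : g (x 2) = x 0 := by rw [hWx.2, show (2 : ZMod 3) + 1 = 0 by decide]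
  have hgy0 : g (y 0) = y 1 := by rw [hWy.2, zero_add]
  have hgy1 : g (y 1) = y 2 := by rw [hWy.2, show (1 : ZMod 3) + 1 = 2 by decide]
  have hgy2 : g (y 2) = y 0 := by rw [hWy.2, show (2 : ZMod 3) + 1 = 0 by decide]
  -- measure infrastructure for the union of the two words
  have hcl : ∀ v, ¬ ((∃ i, v = x i) ∨ (∃ i, v = y i)) →
      ¬ ((∃ i, g v = x i) ∨ (∃ i, g v = y i)) := by
    intro v hv
    rintro (⟨j, hj⟩ | ⟨j, hj⟩)
    · exact hWx.out_closed (fun i hi => hv (Or.inl ⟨i, hi⟩)) j hj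
    · exact hWy.out_closed (fun i hi => hv (Or.inr ⟨i, hi⟩)) j hj
  have hbig : ∀ v, ((∃ i, v = x i) ∨ (∃ i, v = y i)) → g (g v) ≠ v := by
    rintro v (⟨i, rfl⟩ | ⟨i, rfl⟩)
    · rw [hWx.2, hWx.2]
      intro hcon
      exact (by decide : (2 : ZMod 3) ≠ 0)
        (by have : i + 1 + 1 = i := hWx.1 hcon; linear_combination this)
    · rw [hWy.2, hWy.2]
      intro hcon
      exact (by decide : (2 : ZMod 3) ≠ 0)
        (by have : i + 1 + 1 = i := hWy.1 hcon; linear_combination this)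
  have hBstrict : ∀ p : Equiv.Perm (Fin n),
      (∀ v, ¬ ((∃ i, v = x i) ∨ (∃ i, v = y i)) → p v = g v) →
      ∀ w, ((∃ i, w = x i) ∨ (∃ i, w = y i)) → p (p w) = w → Bm p < Bm g :=
    fun p hoff w hw hfix => Bm_strict _ hoff hcl hbig w hw hfix
  have hBmono : ∀ p : Equiv.Perm (Fin n),
      (∀ v, ¬ ((∃ i, v = x i) ∨ (∃ i, v = y i)) → p v = g v) → Bm p ≤ Bm g :=
    fun p hoff => Bm_mono _ hoff hcl hbig
  -- pointwise facts off the two words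
  have hout : ∀ v, ¬ ((∃ i, v = x i) ∨ (∃ i, v = y i)) →
      (∀ j, g v ≠ x j) ∧ (∀ j, g v ≠ y j) :=
    fun v hv => ⟨hWx.out_closed (fun i hi => hv (Or.inl ⟨i, hi⟩)),
      hWy.out_closed (fun i hi => hv (Or.inr ⟨i, hi⟩))⟩
  have hAB : x 0 ≠ x 1 := hx01
  have hAC : x 0 ≠ y 0 := hdisj' 0 0
  have hBC : x 1 ≠ y 0 := hdisj' 1 0
  have E := relM hAB hAC hBC g
  -- partner p1 = swap (x 0) (x 1) * g : strictly smaller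
  have hp1 : Mop (Equiv.swap (x 0) (x 1) * g) ∈ KK n := by
    apply IHB
    apply hBstrict _ _ (x 0) (Or.inl ⟨0, rfl⟩)
    · have hfix : (Equiv.swap (x 0) (x 1) * g) (x 0) = x 0 := by
        rw [Equiv.Perm.mul_apply, hgx0]
        exact Equiv.swap_apply_right _ _
      rw [hfix, hfix]
    · intro v hv
      rw [Equiv.Perm.mul_apply]
      exact Equiv.swap_apply_of_ne_of_ne ((hout v hv).1 0) ((hout v hv).1 1)
  -- partner p4 = cyc3 (x 0) (x 1) (y 0) * g : strictly smaller
  have hp4 : Mop (cyc3 (x 0) (x 1) (y 0) * g) ∈ KK n := by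
    apply IHB
    apply hBstrict _ _ (x 1) (Or.inl ⟨1, rfl⟩)
    · have ha : (cyc3 (x 0) (x 1) (y 0) * g) (x 1) = x 2 := by
        rw [Equiv.Perm.mul_apply, hgx1]
        exact cyc3_other hx02.symm hx12.symm (hdisj' 2 0)
      have hb : (cyc3 (x 0) (x 1) (y 0) * g) (x 2) = x 1 := by
        rw [Equiv.Perm.mul_apply, hgx2]
        exact cyc3_fst hAB hAC
      rw [ha, hb]
    · intro v hv
      rw [Equiv.Perm.mul_apply]
      exact cyc3_other ((hout v hv).1 0) ((hout v hv).1 1) ((hout v hv).2 0)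
  -- partner p5 = (cyc3 (x 0) (x 1) (y 0))⁻¹ * g : strictly smaller
  have hp5 : Mop ((cyc3 (x 0) (x 1) (y 0))⁻¹ * g) ∈ KK n := by
    apply IHB
    apply hBstrict _ _ (x 0) (Or.inl ⟨0, rfl⟩)
    · have hfix : ((cyc3 (x 0) (x 1) (y 0))⁻¹ * g) (x 0) = x 0 := by
        rw [Equiv.Perm.mul_apply, hgx0, cyc3_inv]
        exact cyc3_snd (hdisj 0 0) hx01.symm
      rw [hfix, hfix]
    · intro v hv
      rw [Equiv.Perm.mul_apply, cyc3_inv]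
      exact cyc3_other ((hout v hv).2 0) ((hout v hv).1 1) ((hout v hv).1 0)
  -- partner p2 = swap (x 0) (y 0) * g : a 6-cycle, use `good`
  have hp2 : Mop (Equiv.swap (x 0) (y 0) * g) ∈ KK n := by
    have hoff : ∀ v, ¬ ((∃ i, v = x i) ∨ (∃ i, v = y i)) →
        (Equiv.swap (x 0) (y 0) * g) v = g v := by
      intro v hv
      rw [Equiv.Perm.mul_apply]
      exact Equiv.swap_apply_of_ne_of_ne ((hout v hv).1 0) ((hout v hv).2 0)
    have hw : Word 6 (![x 0, x 1, x 2, y 0, y 1, y 2] : ZMod 6 → Fin n)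
        (Equiv.swap (x 0) (y 0) * g) := by
      apply word6 hx01 hx02 (hdisj' 0 0) (hdisj' 0 1) (hdisj' 0 2) hx12
        (hdisj' 1 0) (hdisj' 1 1) (hdisj' 1 2) (hdisj' 2 0) (hdisj' 2 1)
        (hdisj' 2 2) hy01 hy02 hy12
      · rw [Equiv.Perm.mul_apply, hgx0]
        exact Equiv.swap_apply_of_ne_of_ne hx01.symm (hdisj 0 1).symm
      · rw [Equiv.Perm.mul_apply, hgx1]
        exact Equiv.swap_apply_of_ne_of_ne hx02.symm (hdisj 0 2).symm
      · rw [Equiv.Perm.mul_apply, hgx2]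
        exact Equiv.swap_apply_left _ _
      · rw [Equiv.Perm.mul_apply, hgy0]
        exact Equiv.swap_apply_of_ne_of_ne (hdisj 1 0) hy01.symm
      · rw [Equiv.Perm.mul_apply, hgy1]
        exact Equiv.swap_apply_of_ne_of_ne (hdisj 2 0) hy02.symm
      · rw [Equiv.Perm.mul_apply, hgy2]
        exact Equiv.swap_apply_right _ _
    exact good 6 (by norm_num) _ _ hw
      (fun h hh => IHB h (lt_of_lt_of_le hh (hBmono _ hoff)))
  -- partner p3 = swap (x 1) (y 0) * g : a 6-cycle, use `good`
  have hp3 : Mop (Equiv.swap (x 1) (y 0) * g) ∈ KK n := by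
    have hoff : ∀ v, ¬ ((∃ i, v = x i) ∨ (∃ i, v = y i)) →
        (Equiv.swap (x 1) (y 0) * g) v = g v := by
      intro v hv
      rw [Equiv.Perm.mul_apply]
      exact Equiv.swap_apply_of_ne_of_ne ((hout v hv).1 1) ((hout v hv).2 0)
    have hw : Word 6 (![x 0, y 0, y 1, y 2, x 1, x 2] : ZMod 6 → Fin n)
        (Equiv.swap (x 1) (y 0) * g) := by
      apply word6 (hdisj' 0 0) (hdisj' 0 1) (hdisj' 0 2) hx01 hx02
        hy01 hy02 (hdisj 0 1) (hdisj 0 2) hy12 (hdisj 1 1)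
        (hdisj 1 2) (hdisj 2 1) (hdisj 2 2) hx12
      · rw [Equiv.Perm.mul_apply, hgx0]
        exact Equiv.swap_apply_left _ _
      · rw [Equiv.Perm.mul_apply, hgy0]
        exact Equiv.swap_apply_of_ne_of_ne (hdisj 1 1) hy01.symm
      · rw [Equiv.Perm.mul_apply, hgy1]
        exact Equiv.swap_apply_of_ne_of_ne (hdisj 2 1) hy02.symm
      · rw [Equiv.Perm.mul_apply, hgy2]
        exact Equiv.swap_apply_right _ _
      · rw [Equiv.Perm.mul_apply, hgx1]
        exact Equiv.swap_apply_of_ne_of_ne hx12.symm (hdisj' 2 0)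
      · rw [Equiv.Perm.mul_apply, hgx2]
        exact Equiv.swap_apply_of_ne_of_ne hx01 (hdisj' 0 0)
    exact good 6 (by norm_num) _ _ hw
      (fun h hh => IHB h (lt_of_lt_of_le hh (hBmono _ hoff)))
  have E1 := eq_sub_of_add_eq E
  have E2 := eq_sub_of_add_eq E1
  rw [E2]
  exact sub_mem (sub_mem (add_mem (add_mem hp1 hp2) hp3) hp5) hp4


/-- Main lemma: every symmetrized permutation operator lies in the span of
involution operators. -/
lemma mop_mem : ∀ g : Equiv.Perm (Fin n), Mop g ∈ KK n := by
  suffices H : ∀ B : ℕ, ∀ g : Equiv.Perm (Fin n), Bm g ≤ B → Mop g ∈ KK n by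
    exact fun g => H (Bm g) g le_rfl
  intro B
  induction B using Nat.strong_induction_on with
  | _ B IH =>
  intro g hB
  by_cases hinv : g * g = 1
  · exact mop_invol_mem hinv
  have hex : ∃ a, g (g a) ≠ a := by
    by_contra hc
    push_neg at hc
    apply hinv
    apply Equiv.ext
    intro v
    rw [Equiv.Perm.mul_apply, hc]
    rfl
  obtain ⟨a, ha⟩ := hex
  have IHB : ∀ h, Bm h < Bm g → Mop h ∈ KK n :=
    fun h hh => IH (Bm h) (lt_of_lt_of_le hh hB) h le_rfl
  obtain ⟨k, hk3, x, hWx, hx0⟩ := mk_word ha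
  by_cases hk4 : 4 ≤ k
  · exact good k hk4 g x hWx IHB
  have hk : k = 3 := by omega
  subst hk
  by_cases hb : ∃ b, (∀ i, b ≠ x i) ∧ g (g b) ≠ b
  · obtain ⟨b, hbX, hb2⟩ := hb
    obtain ⟨kb, hkb3, y, hWy, hy0⟩ := mk_word hb2
    by_cases hkb4 : 4 ≤ kb
    · exact good kb hkb4 g y hWy IHB
    have hkb : kb = 3 := by omega
    subst hkb
    have hdisj : ∀ i j, y i ≠ x j := by
      intro i j hij
      have hcast : ((i.val : ℕ) : ZMod 3) = i := by
        rw [ZMod.natCast_val, ZMod.cast_id]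
      have hy : y i = (⇑g)^[i.val] b := by
        rw [← hy0, word_iter hWy i.val 0, zero_add, hcast]
      have h1 : (⇑g)^[3 - i.val] (y i) = b := by
        rw [hy, ← Function.iterate_add_apply,
          show 3 - i.val + i.val = 3 by have := ZMod.val_lt i; omega,
          ← hy0, word_iter hWy 3 0,
          show (0 : ZMod 3) + ((3 : ℕ) : ZMod 3) = 0 by decide, hy0]
      rw [hij, word_iter hWx (3 - i.val) j] at h1
      exact hbX _ h1.symm
    exact case3_mixed hWx hWy hdisj IHB
  · push_neg at hb
    exact case3_invol hWx hb

end SpanInvol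

/-- The symmetric part `Σₙ⁺` of the swap algebra (`dim V = 2`), i.e. the span of the
operators `g + g⁻¹` for `g ∈ Sₙ`, is spanned over `ℂ` by the operators induced by
involutions of `Sₙ`. -/
theorem symmetric_part_spanned_by_involutions (n : ℕ) :
    Submodule.span ℂ
        {f : Module.End ℂ ((Fin n → Fin 2) → ℂ) |
          ∃ g : Equiv.Perm (Fin n), f = permOp 2 n g + permOp 2 n g⁻¹} =
      Submodule.span ℂ
        {f : Module.End ℂ ((Fin n → Fin 2) → ℂ) |
          ∃ g : Equiv.Perm (Fin n), g * g = 1 ∧ f = permOp 2 n g} := by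
  apply le_antisymm
  · rw [Submodule.span_le]
    rintro f ⟨g, rfl⟩
    exact SpanInvol.mop_mem g
  · rw [Submodule.span_le]
    rintro f ⟨t, ht, rfl⟩
    have hinv : t⁻¹ = t := by rw [inv_eq_iff_mul_eq_one]; exact ht
    have hmem : permOp 2 n t + permOp 2 n t⁻¹ ∈ Submodule.span ℂ
        {f : Module.End ℂ ((Fin n → Fin 2) → ℂ) |
          ∃ g : Equiv.Perm (Fin n), f = permOp 2 n g + permOp 2 n g⁻¹} :=
      Submodule.subset_span ⟨t, rfl⟩
    have heq : permOp 2 n t = (2⁻¹ : ℂ) • (permOp 2 n t + permOp 2 n t⁻¹) := by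
      rw [hinv, ← two_smul ℂ, smul_smul]
      norm_num
    rw [SetLike.mem_coe, heq]
    exact Submodule.smul_mem _ _ hmem
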